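/- For x > 0, x ≠ 1, and t ∈ (0,1), log g_t(x) = ((1−t)/t)∫₀ᵗ log(αx + 1 − α) dα + (t/(1−t))∫ₜ¹ log(αx + 1 − α) dα, where g_t(x) = (1/e)(1−t+tx)^{((1−2t)(1−t+tx))/(t(1−t)(x−1))}·(x^{tx/(1−t)})^{1/(x−1)}. -/

import Mathlib

open Set MeasureTheory

/-- Integral representation of the logarithm of the representing function `g_t`
of the weighted identric mean. -/
theorem log_rep_fun_weighted_identric (x t : ℝ) (hx : 0 < x) (hx1 : x ≠ 1)
    (ht : t ∈ Ioo (0:ℝ) 1) :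
    Real.log ((1 / Real.exp 1) *
        (1 - t + t * x) ^ ((1 - 2*t) * (1 - t + t * x) / (t * (1 - t) * (x - 1))) *
        (x ^ (t * x / (1 - t))) ^ (1 / (x - 1))) =
      ((1 - t) / t) * (∫ α in (0:ℝ)..t, Real.log (α * x + 1 - α)) +
        (t / (1 - t)) * (∫ α in t..(1:ℝ), Real.log (α * x + 1 - α)) := by
  obtain ⟨ht0, ht1⟩ := ht
  have hx1' : x - 1 ≠ 0 := sub_ne_zero.mpr hx1
  have ht0' : t ≠ 0 := ne_of_gt ht0
  have ht1' : (1:ℝ) - t ≠ 0 := by linarith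
  have hu : (0:ℝ) < 1 - t + t * x := by nlinarith
  have key : ∀ a b : ℝ, 0 < (x-1)*a+1 → 0 < (x-1)*b+1 →
      (∫ α in a..b, Real.log (α * x + 1 - α)) =
      (((x-1)*b+1) * Real.log ((x-1)*b+1) - ((x-1)*a+1) * Real.log ((x-1)*a+1)
        - ((x-1)*b+1) + ((x-1)*a+1)) / (x-1) := by
    intro a b ha hb
    have h1 : ∀ α:ℝ, α * x + 1 - α = (x-1)*α + 1 := by intro α; ring
    simp_rw [h1]
    rw [intervalIntegral.integral_comp_mul_add Real.log hx1' 1,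
      integral_log]
    rw [smul_eq_mul]
    field_simp
  have e1 : (x-1)*t+1 = 1 - t + t*x := by ring
  have e2 : (x-1)*(0:ℝ)+1 = 1 := by ring
  have e3 : (x-1)*(1:ℝ)+1 = x := by ring
  have I1 : (∫ α in (0:ℝ)..t, Real.log (α * x + 1 - α)) =
      ((1-t+t*x) * Real.log (1-t+t*x) - (1-t+t*x) + 1) / (x-1) := by
    rw [key 0 t (by rw [e2]; norm_num) (by rw [e1]; exact hu)]
    rw [e1, e2]
    simp
  have I2 : (∫ α in t..(1:ℝ), Real.log (α * x + 1 - α)) =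
      (x * Real.log x - (1-t+t*x) * Real.log (1-t+t*x) - x + (1-t+t*x)) / (x-1) := by
    rw [key t 1 (by rw [e1]; exact hu) (by rw [e3]; exact hx)]
    rw [e1, e3]
  rw [I1, I2]
  have hA : (0:ℝ) < (1 - t + t * x) ^ ((1 - 2*t) * (1 - t + t * x) / (t * (1 - t) * (x - 1))) :=
    Real.rpow_pos_of_pos hu _
  have hB : (0:ℝ) < (x ^ (t * x / (1 - t))) ^ (1 / (x - 1)) :=
    Real.rpow_pos_of_pos (Real.rpow_pos_of_pos hx _) _
  rw [Real.log_mul (by positivity) (ne_of_gt hB),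
    Real.log_mul (by positivity) (ne_of_gt hA),
    Real.log_rpow hu, Real.log_rpow (Real.rpow_pos_of_pos hx _), Real.log_rpow hx,
    one_div, Real.log_inv, Real.log_exp]
  field_simp
  ring
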